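/- Let ℓ ≥ 1, let h ≥ 3, and let G_1, …, G_q ∈ U_ℓ be 3-graphs each on at most h vertices, and set t = Σ_{i=1}^q v(G_i). Then r(G_1, …, G_q) ≤ (qh)^{q^{ℓ−1} · h^{2ℓ} · t}. -/

import Mathlib

/-- A 3-uniform hypergraph with vertices drawn from ℕ. -/
structure ThreeGraph where
  verts : Finset ℕ
  edges : Finset (Finset ℕ)
  edge_card : ∀ e ∈ edges, e.card = 3
  edge_sub : ∀ e ∈ edges, e ⊆ verts

/-- A 3-graph is tripartite if its vertex set can be partitioned into three parts so that
every edge has exactly one vertex in each part. -/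
def Tripartite (G : ThreeGraph) : Prop :=
  ∃ V1 V2 V3 : Finset ℕ,
    Disjoint V1 V2 ∧ Disjoint V1 V3 ∧ Disjoint V2 V3 ∧
    V1 ∪ V2 ∪ V3 = G.verts ∧
    ∀ e ∈ G.edges, (e ∩ V1).card = 1 ∧ (e ∩ V2).card = 1 ∧ (e ∩ V3).card = 1

/-- Membership in the family 𝒰₁: there is a vertex subset intersecting every edge in
exactly one vertex. -/
def InU1 (G : ThreeGraph) : Prop :=
  ∃ W : Finset ℕ, W ⊆ G.verts ∧ ∀ e ∈ G.edges, (e ∩ W).card = 1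

/-- `Reducible G H F` : `G` is reducible to the pair `(H, F)` by collapsing a collapsible
set `U` (with `F = G[U]`), where the new vertex of `H` is `v`. -/
def Reducible (G H F : ThreeGraph) : Prop :=
  ∃ (U : Finset ℕ) (v : ℕ),
    U ⊆ G.verts ∧ 2 ≤ U.card ∧ U.card < G.verts.card ∧
    (∀ e ∈ G.edges, (e ∩ U).card ≠ 2) ∧
    v ∉ G.verts ∧
    H.verts = (G.verts \ U) ∪ {v} ∧
    H.edges = G.edges.filter (fun e => e ∩ U = ∅) ∪
      (G.edges.filter (fun e => (e ∩ U).card = 1)).image (fun e => (e \ U) ∪ {v}) ∧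
    F.verts = U ∧
    F.edges = G.edges.filter (fun e => e ⊆ U)

/-- `MemU i G` means `G ∈ 𝒰ᵢ`: `𝒰₀` is the family of tripartite 3-graphs, `𝒰₁` of 3-graphs
with a vertex set meeting every edge exactly once, the families are nested, and for `i ≥ 2`,
`G ∈ 𝒰ᵢ` whenever `G` is reducible to `(H, F)` with `H ∈ 𝒰ᵢ₋₁` and `F ∈ 𝒰ᵢ`. -/
inductive MemU : ℕ → ThreeGraph → Prop where
  | zero (G : ThreeGraph) : Tripartite G → MemU 0 G
  | one (G : ThreeGraph) : InU1 G → MemU 1 G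
  | mono (i : ℕ) (G : ThreeGraph) : MemU i G → MemU (i + 1) G
  | reduce (i : ℕ) (G H F : ThreeGraph) :
      Reducible G H F → MemU (i + 1) H → MemU (i + 2) F → MemU (i + 2) G

/-- `G ∈ 𝒰 = ⋃ᵢ 𝒰ᵢ`. -/
def InU (G : ThreeGraph) : Prop := ∃ i, MemU i G

/-- A monochromatic copy of `G` in color `i` under the coloring `χ` of the triples of
`Fin N`. -/
def MonoCopy {N q : ℕ} (χ : Finset (Fin N) → Fin q) (i : Fin q) (G : ThreeGraph) : Prop :=
  ∃ f : ℕ → Fin N, Set.InjOn f ↑G.verts ∧ ∀ e ∈ G.edges, χ (e.image f) = i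

/-- `N` vertices suffice to find, in any `q`-coloring, a monochromatic copy of `Gs i` in
color `i` for some `i`. -/
def RamseyProp {q : ℕ} (Gs : Fin q → ThreeGraph) (N : ℕ) : Prop :=
  ∀ χ : Finset (Fin N) → Fin q, ∃ i : Fin q, MonoCopy χ i (Gs i)

/-- The Ramsey number `r(G₁, …, G_q)`. -/
noncomputable def ramseyNumber {q : ℕ} (Gs : Fin q → ThreeGraph) : ℕ :=
  sInf {N | RamseyProp Gs N}

/-- The `q`-color Ramsey number `r(G; q)`. -/
noncomputable def rq (G : ThreeGraph) (q : ℕ) : ℕ :=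
  ramseyNumber (fun _ : Fin q => G)

-- ===================== helpers =====================

/-- copy of G in color i with image inside Y -/
def CopyIn {N q : ℕ} (χ : Finset (Fin N) → Fin q) (i : Fin q) (G : ThreeGraph)
    (Y : Finset (Fin N)) : Prop :=
  ∃ f : ℕ → Fin N, Set.InjOn f ↑G.verts ∧ (∀ x ∈ G.verts, f x ∈ Y) ∧
    ∀ e ∈ G.edges, χ (e.image f) = i

lemma copyIn_monoCopy {N q : ℕ} {χ : Finset (Fin N) → Fin q} {i : Fin q} {G : ThreeGraph}
    {Y : Finset (Fin N)} (h : CopyIn χ i G Y) : MonoCopy χ i G := by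
  obtain ⟨f, h1, _, h3⟩ := h
  exact ⟨f, h1, h3⟩

/-- injection of a finset of α into a finset Y of β, as a total function -/
lemma exists_injOn_into {α β : Type*} [DecidableEq α] (s : Finset α) (Y : Finset β)
    (h : s.card ≤ Y.card) (hY : 0 < Y.card) :
    ∃ f : α → β, Set.InjOn f ↑s ∧ ∀ x ∈ s, f x ∈ Y := by
  classical
  have h1 : Fintype.card s ≤ Fintype.card Y := by
    simpa [Fintype.card_coe] using h
  obtain ⟨emb⟩ := Function.Embedding.nonempty_of_card_le h1
  obtain ⟨y0, hy0⟩ := Finset.card_pos.mp hY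
  refine ⟨fun x => if hx : x ∈ s then (emb ⟨x, hx⟩ : β) else y0, ?_, ?_⟩
  · intro a ha b hb hab
    simp only [Finset.mem_coe] at ha hb
    simp only [ha, hb, dif_pos] at hab
    have := emb.injective (Subtype.coe_injective hab)
    exact congrArg Subtype.val this
  · intro x hx
    simp only [hx, dif_pos]
    exact (emb ⟨x, hx⟩).2

/-- transfer a Ramsey property to any subset of size ≥ n of a larger ground set -/
lemma ramsey_subset {q n N : ℕ} {Gs : Fin q → ThreeGraph} (h : RamseyProp Gs n)
    (χ : Finset (Fin N) → Fin q) (Y : Finset (Fin N)) (hY : n ≤ Y.card) (hn : 0 < n) :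
    ∃ i, CopyIn χ i (Gs i) Y := by
  classical
  have h1 : Fintype.card (Fin n) ≤ Fintype.card Y := by
    simpa [Fintype.card_coe] using hY
  obtain ⟨emb⟩ := Function.Embedding.nonempty_of_card_le h1
  set g : Fin n → Fin N := fun a => (emb a : Fin N) with hg
  have hginj : Function.Injective g := fun a b hab =>
    emb.injective (Subtype.coe_injective hab)
  obtain ⟨i, f, hf1, hf2⟩ := h (fun s => χ (s.image g))
  refine ⟨i, g ∘ f, ?_, ?_, ?_⟩
  · intro a ha b hb hab
    exact hf1 ha hb (hginj hab)
  · intro x _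
    exact (emb (f x)).2
  · intro e he
    have := hf2 e he
    simp only [] at this
    rwa [Finset.image_image] at this
lemma ramsey_mono {q n N : ℕ} {Gs : Fin q → ThreeGraph} (h : RamseyProp Gs n)
    (hn : 0 < n) (hN : n ≤ N) : RamseyProp Gs N := by
  intro χ
  have hY : n ≤ (Finset.univ : Finset (Fin N)).card := by simpa using hN
  obtain ⟨i, hc⟩ := ramsey_subset h χ Finset.univ hY hn
  exact ⟨i, copyIn_monoCopy hc⟩

/-- trivial copy of an edgeless graph -/
lemma trivial_copy {N q : ℕ} (χ : Finset (Fin N) → Fin q) (i : Fin q) {G : ThreeGraph}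
    (he : G.edges = ∅) (hv : G.verts.card ≤ N) (hN : 0 < N) : MonoCopy χ i G := by
  have hY : G.verts.card ≤ (Finset.univ : Finset (Fin N)).card := by simpa using hv
  obtain ⟨f, h1, _⟩ := exists_injOn_into G.verts Finset.univ hY (by simpa using hN)
  exact ⟨f, h1, by simp [he]⟩

/-- split a 3-edge meeting W in exactly one vertex -/
lemma card3_split {e W : Finset ℕ} (he : e.card = 3) (h1 : (e ∩ W).card = 1) :
    ∃ w x y, w ∈ W ∧ x ∉ W ∧ y ∉ W ∧ x ≠ y ∧ w ≠ x ∧ w ≠ y ∧ e = {w, x, y} := by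
  classical
  obtain ⟨w, hw⟩ := Finset.card_eq_one.mp h1
  have hwe : w ∈ e ∧ w ∈ W := by
    have : w ∈ e ∩ W := hw ▸ Finset.mem_singleton_self w
    exact ⟨(Finset.mem_inter.mp this).1, (Finset.mem_inter.mp this).2⟩
  have h2 : (e.erase w).card = 2 := by
    rw [Finset.card_erase_of_mem hwe.1, he]
  obtain ⟨x, y, hxy, hexy⟩ := Finset.card_eq_two.mp h2
  have hx : x ∈ e.erase w := hexy ▸ by simp
  have hy : y ∈ e.erase w := hexy ▸ by simp
  have hnotW : ∀ z ∈ e.erase w, z ∉ W := by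
    intro z hz hzW
    have hze : z ∈ e := Finset.mem_of_mem_erase hz
    have : z ∈ e ∩ W := Finset.mem_inter.mpr ⟨hze, hzW⟩
    rw [hw, Finset.mem_singleton] at this
    exact (Finset.ne_of_mem_erase hz) this
  refine ⟨w, x, y, hwe.2, hnotW x hx, hnotW y hy, hxy,
    fun h => (Finset.ne_of_mem_erase hx) h.symm,
    fun h => (Finset.ne_of_mem_erase hy) h.symm, ?_⟩
  have : e = insert w (e.erase w) := (Finset.insert_erase hwe.1).symm
  rw [this, hexy]

lemma triple_image {α β : Type*} [DecidableEq α] [DecidableEq β] (f : α → β) (a b c : α) :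
    ({a, b, c} : Finset α).image f = {f a, f b, f c} := by
  simp [Finset.image_insert]

lemma triple_rot {α : Type*} [DecidableEq α] (a b c : α) :
    ({a, b, c} : Finset α) = {b, c, a} := by
  ext z; simp; tauto

-- ===================== multicolor graph Ramsey =====================

lemma GR_seq {V : Type*} [DecidableEq V] {q : ℕ} (hq : 0 < q) (c : V → V → Fin q) :
    ∀ (L : ℕ) (S : Finset V), (2*q)^L ≤ S.card →
    ∃ (x : Fin L → V) (col : Fin L → Fin q),
      (∀ a, x a ∈ S) ∧ (∀ a b : Fin L, a < b → x a ≠ x b ∧ c (x a) (x b) = col a) := by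
  classical
  intro L
  induction L with
  | zero =>
      intro S _
      exact ⟨Fin.elim0, Fin.elim0, fun a => a.elim0, fun a => a.elim0⟩
  | succ L IH =>
      intro S hS
      have hcard : 0 < S.card := lt_of_lt_of_le (by positivity) hS
      obtain ⟨x0, hx0⟩ := Finset.card_pos.mp hcard
      have hmaps : ∀ y ∈ S.erase x0, c x0 y ∈ (Finset.univ : Finset (Fin q)) := by
        intro y _; exact Finset.mem_univ _
      have hne : (Finset.univ : Finset (Fin q)).Nonempty := ⟨⟨0, hq⟩, Finset.mem_univ _⟩
      have hcount : (Finset.univ : Finset (Fin q)).card * (2*q)^L ≤ (S.erase x0).card := by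
        rw [Finset.card_erase_of_mem hx0, Finset.card_univ, Fintype.card_fin]
        have h1 : (2*q)^(L+1) = 2*q*(2*q)^L := by ring
        have h2 : 0 < q * (2*q)^L := by positivity
        have h3 : q*(2*q)^L + q*(2*q)^L = 2*q*(2*q)^L := by ring
        omega
      obtain ⟨i0, _, hfib⟩ :=
        Finset.exists_le_card_fiber_of_mul_le_card_of_maps_to hmaps hne hcount
      set S' := (S.erase x0).filter (fun y => c x0 y = i0) with hS'
      obtain ⟨x', col', hx'S, hx'p⟩ := IH S' hfib
      have hS'sub : ∀ y ∈ S', y ∈ S.erase x0 := fun y hy => (Finset.mem_filter.mp hy).1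
      refine ⟨Fin.cons x0 x', Fin.cons i0 col', ?_, ?_⟩
      · intro a
        refine Fin.cases ?_ ?_ a
        · simpa using hx0
        · intro a'
          simp only [Fin.cons_succ]
          exact Finset.mem_of_mem_erase (hS'sub _ (hx'S a'))
      · intro a b hab
        rcases Fin.eq_zero_or_eq_succ a with rfl | ⟨a', rfl⟩
        · rcases Fin.eq_zero_or_eq_succ b with rfl | ⟨b', rfl⟩
          · exact absurd hab (lt_irrefl _)
          · have hb' : x' b' ∈ S' := hx'S b'
            rw [hS', Finset.mem_filter] at hb'
            simp only [Fin.cons_zero, Fin.cons_succ]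
            exact ⟨fun h => (Finset.ne_of_mem_erase hb'.1) h.symm, hb'.2⟩
        · rcases Fin.eq_zero_or_eq_succ b with rfl | ⟨b', rfl⟩
          · exact absurd hab (Fin.not_lt_zero _)
          · have hab' : a' < b' := Fin.succ_lt_succ_iff.mp hab
            simpa only [Fin.cons_succ] using hx'p a' b' hab'

/-- multicolor graph Ramsey with explicit bound: in any symmetric q-coloring of pairs of a
set of size (2q)^(qh) there is a monochromatic set of size h -/
lemma GR {V : Type*} [DecidableEq V] {q h : ℕ} (hq : 0 < q) (c : V → V → Fin q)
    (hsym : ∀ u v, c u v = c v u) (S : Finset V) (hS : (2*q)^(q*h) ≤ S.card) :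
    ∃ (i : Fin q) (T : Finset V), T ⊆ S ∧ T.card = h ∧
      ∀ u ∈ T, ∀ v ∈ T, u ≠ v → c u v = i := by
  classical
  obtain ⟨x, col, hxS, hxp⟩ := GR_seq hq c (q*h) S hS
  have hxinj : Function.Injective x := by
    intro a b hab
    by_contra hne
    rcases lt_or_gt_of_ne hne with hlt | hlt
    · exact (hxp a b hlt).1 hab
    · exact (hxp b a hlt).1 hab.symm
  have hmaps : ∀ a ∈ (Finset.univ : Finset (Fin (q*h))), col a ∈ (Finset.univ : Finset (Fin q)) :=
    fun a _ => Finset.mem_univ _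
  have hne : (Finset.univ : Finset (Fin q)).Nonempty := ⟨⟨0, hq⟩, Finset.mem_univ _⟩
  have hcount : (Finset.univ : Finset (Fin q)).card * h ≤ (Finset.univ : Finset (Fin (q*h))).card := by
    rw [Finset.card_univ, Finset.card_univ, Fintype.card_fin, Fintype.card_fin]
  obtain ⟨i, _, hfib⟩ := Finset.exists_le_card_fiber_of_mul_le_card_of_maps_to hmaps hne hcount
  set A := (Finset.univ : Finset (Fin (q*h))).filter (fun a => col a = i) with hA
  have hTcard : (A.image x).card = A.card := Finset.card_image_of_injective _ hxinj
  obtain ⟨T, hTsub, hTc⟩ := Finset.exists_subset_card_eq (show h ≤ (A.image x).card by omega)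
  refine ⟨i, T, ?_, hTc, ?_⟩
  · intro u hu
    obtain ⟨a, _, rfl⟩ := Finset.mem_image.mp (hTsub hu)
    exact hxS a
  · intro u hu v hv huv
    obtain ⟨a, ha, rfl⟩ := Finset.mem_image.mp (hTsub hu)
    obtain ⟨b, hb, rfl⟩ := Finset.mem_image.mp (hTsub hv)
    have hcola : col a = i := (Finset.mem_filter.mp ha).2
    have hcolb : col b = i := (Finset.mem_filter.mp hb).2
    have hab : a ≠ b := fun h' => huv (congrArg x h')
    rcases lt_or_gt_of_ne hab with hlt | hlt
    · rw [(hxp a b hlt).2, hcola]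
    · rw [hsym, (hxp b a hlt).2, hcolb]

-- ===================== structural lemmas =====================

lemma memU_one_inU1 {G : ThreeGraph} (h : MemU 1 G) : InU1 G := by
  cases h with
  | one _ h => exact h
  | mono i G h =>
      cases h with
      | zero _ htri =>
          obtain ⟨V1, V2, V3, _, _, _, hunion, hedge⟩ := htri
          refine ⟨V1, ?_, fun e he => (hedge e he).1⟩
          rw [← hunion]
          exact (Finset.subset_union_left).trans Finset.subset_union_left

lemma memU_step {n : ℕ} {G : ThreeGraph} (h : MemU (n + 2) G) :
    MemU (n + 1) G ∨ ∃ H F, Reducible G H F ∧ MemU (n + 1) H ∧ MemU (n + 2) F := by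
  cases h with
  | mono i G h => exact Or.inl h
  | reduce i G H F hred hH hF => exact Or.inr ⟨H, F, hred, hH, hF⟩

-- ===================== counting lemmas =====================

/-- `N^w * C(N-w, p-w) ≤ p^w * C(N, p)` -/
lemma descend_choose : ∀ (w p N : ℕ), w ≤ p → p ≤ N →
    N^w * Nat.choose (N-w) (p-w) ≤ p^w * Nat.choose N p := by
  intro w
  induction w with
  | zero => intro p N _ _; simp
  | succ w IH =>
      intro p N hwp hpN
      have hw : w ≤ p := by omega
      have hwN : w < N := by omega
      have hNw : 0 < N - w := by omega
      -- identity : (N-w) * C(N-w-1, p-w-1) = C(N-w, p-w) * (p-w)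
      have hid : (N-w) * Nat.choose (N-w-1) (p-w-1) = Nat.choose (N-w) (p-w) * (p-w) := by
        have h1 := Nat.add_one_mul_choose_eq (N-w-1) (p-w-1)
        have h2 : N-w-1+1 = N - w := by omega
        have h3 : p-w-1+1 = p - w := by omega
        rw [h2, h3] at h1
        exact h1
      have key : (N-w) * (N^(w+1) * Nat.choose (N-(w+1)) (p-(w+1)))
          ≤ (N-w) * (p^(w+1) * Nat.choose N p) := by
        have e1 : (N-w) * (N^(w+1) * Nat.choose (N-(w+1)) (p-(w+1)))
            = N^w * (N * ((N-w) * Nat.choose (N-w-1) (p-w-1))) := by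
          have : N-(w+1) = N-w-1 := by omega
          have h2 : p-(w+1) = p-w-1 := by omega
          rw [this, h2]; ring
        rw [e1, hid]
        have e2 : N^w * (N * (Nat.choose (N-w) (p-w) * (p-w)))
            = (N * (p-w)) * (N^w * Nat.choose (N-w) (p-w)) := by ring
        rw [e2]
        have step1 : (N * (p-w)) * (N^w * Nat.choose (N-w) (p-w))
            ≤ (N * (p-w)) * (p^w * Nat.choose N p) :=
          Nat.mul_le_mul_left _ (IH p N hw hpN)
        have step2 : (N * (p-w)) * (p^w * Nat.choose N p)
            ≤ ((N-w) * p) * (p^w * Nat.choose N p) := by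
          apply Nat.mul_le_mul_right
          have : N * (p-w) ≤ (N-w) * p := by
            have h4 : w ≤ p := hw
            have h5 : p ≤ N := hpN
            nlinarith [Nat.sub_add_cancel (le_of_lt hwN), Nat.sub_add_cancel h4]
          exact this
        calc (N * (p-w)) * (N^w * Nat.choose (N-w) (p-w))
            ≤ (N * (p-w)) * (p^w * Nat.choose N p) := step1
          _ ≤ ((N-w) * p) * (p^w * Nat.choose N p) := step2
          _ = (N-w) * (p^(w+1) * Nat.choose N p) := by ring
      exact Nat.le_of_mul_le_mul_left key hNw

/-- for `1 ≤ w ≤ p ≤ N`: `N * C(N-w,p-w) ≤ p^w * C(N,p)` -/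
lemma descend_choose' {w p N : ℕ} (hw1 : 1 ≤ w) (hwp : w ≤ p) (hpN : p ≤ N) :
    N * Nat.choose (N-w) (p-w) ≤ p^w * Nat.choose N p := by
  have h1 := descend_choose w p N hwp hpN
  have h2 : N * Nat.choose (N-w) (p-w) ≤ N^w * Nat.choose (N-w) (p-w) := by
    apply Nat.mul_le_mul_right
    calc N = N^1 := (pow_one N).symm
      _ ≤ N^w := Nat.pow_le_pow_right (by omega) hw1
  exact h2.trans h1

/-- number of p-subsets of univ containing a fixed w-set is ≤ C(N-w, p-w) -/
lemma card_supersets_le {N p w : ℕ} (R : Finset (Fin N)) (hR : R.card = w) :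
    (((Finset.univ : Finset (Fin N)).powersetCard p).filter (fun P => R ⊆ P)).card
      ≤ Nat.choose (N-w) (p-w) := by
  classical
  have : (((Finset.univ : Finset (Fin N)).powersetCard p).filter (fun P => R ⊆ P)).card
      ≤ (((Finset.univ : Finset (Fin N)) \ R).powersetCard (p-w)).card := by
    apply Finset.card_le_card_of_injOn (fun P => P \ R)
    · intro P hP
      rw [Finset.mem_coe, Finset.mem_filter, Finset.mem_powersetCard] at hP
      obtain ⟨⟨_, hcard⟩, hRP⟩ := hP
      rw [Finset.mem_coe, Finset.mem_powersetCard]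
      constructor
      · exact Finset.sdiff_subset_sdiff (Finset.subset_univ P) (le_refl R)
      · rw [Finset.card_sdiff_of_subset hRP, hcard, hR]
    · intro P hP Q hQ hPQ
      rw [Finset.coe_filter] at hP hQ
      simp only [Set.mem_setOf_eq] at hP hQ
      have h1 : P = (P \ R) ∪ R := by
        rw [Finset.sdiff_union_of_subset hP.2]
      have h2 : Q = (Q \ R) ∪ R := by
        rw [Finset.sdiff_union_of_subset hQ.2]
      simp only [] at hPQ
      rw [h1, h2, hPQ]
  calc _ ≤ _ := this
    _ = Nat.choose (N-w) (p-w) := by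
        rw [Finset.card_powersetCard, Finset.card_sdiff_of_subset (Finset.subset_univ R),
          Finset.card_univ, Fintype.card_fin, hR]

-- ===================== arithmetic for the base case =====================

lemma base_arith {q h t : ℕ} (hq : 1 ≤ q) (hh : 3 ≤ h) (ht : 3*q ≤ t) :
    (2*q)^(q*h) + q * Nat.choose ((2*q)^(q*h)) h * h ≤ (q*h)^(h^2*t) := by
  have hqh2 : 2 ≤ q*h := by nlinarith
  have hqh1 : 1 ≤ q*h := by omega
  have hp : (2*q)^(q*h) ≤ (q*h)^(q*h) :=
    Nat.pow_le_pow_left (by nlinarith) _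
  have hC : Nat.choose ((2*q)^(q*h)) h ≤ ((2*q)^(q*h))^h := Nat.choose_le_pow _ _
  have h2 : ((2*q)^(q*h))^h ≤ ((q*h)^(q*h))^h := Nat.pow_le_pow_left hp _
  have h3 : ((q*h)^(q*h))^h = (q*h)^(q*h*h) := by rw [← pow_mul]
  have hterm2 : q * Nat.choose ((2*q)^(q*h)) h * h ≤ (q*h)^(q*h*h+1) := by
    calc q * Nat.choose ((2*q)^(q*h)) h * h = (q*h) * Nat.choose ((2*q)^(q*h)) h := by ring
      _ ≤ (q*h) * (q*h)^(q*h*h) := by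
          apply Nat.mul_le_mul_left
          calc Nat.choose ((2*q)^(q*h)) h ≤ ((2*q)^(q*h))^h := hC
            _ ≤ ((q*h)^(q*h))^h := h2
            _ = (q*h)^(q*h*h) := h3
      _ = (q*h)^(q*h*h+1) := by rw [pow_succ]; ring
  have hterm1 : (2*q)^(q*h) ≤ (q*h)^(q*h*h+1) := by
    calc (2*q)^(q*h) ≤ (q*h)^(q*h) := hp
      _ ≤ (q*h)^(q*h*h+1) := Nat.pow_le_pow_right hqh1 (by nlinarith)
  have hsum : (2*q)^(q*h) + q * Nat.choose ((2*q)^(q*h)) h * h ≤ 2 * (q*h)^(q*h*h+1) := by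
    omega
  calc (2*q)^(q*h) + q * Nat.choose ((2*q)^(q*h)) h * h
      ≤ 2 * (q*h)^(q*h*h+1) := hsum
    _ ≤ (q*h) * (q*h)^(q*h*h+1) := Nat.mul_le_mul_right _ hqh2
    _ = (q*h)^(q*h*h+2) := by rw [pow_succ, pow_succ]; ring
    _ ≤ (q*h)^(h^2*t) := by
        apply Nat.pow_le_pow_right hqh1
        have : 3*q*h^2 ≤ h^2*t := by nlinarith
        nlinarith

-- ===================== base case: all graphs in 𝒰₁ =====================

lemma baseU1 {q h t : ℕ} (hh : 3 ≤ h) (hq : 0 < q) (Gs : Fin q → ThreeGraph)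
    (hU : ∀ i, InU1 (Gs i)) (hcard : ∀ i, (Gs i).verts.card ≤ h)
    (hsum : ∑ i, (Gs i).verts.card ≤ t) :
    RamseyProp Gs ((q*h)^(h^2*t)) := by
  classical
  set N := (q*h)^(h^2*t) with hN
  intro χ
  have hqh1 : 1 ≤ q*h := by nlinarith
  have hN1 : 1 ≤ N := Nat.one_le_pow _ _ (by omega)
  by_cases hemp : ∃ i, (Gs i).edges = ∅
  · obtain ⟨i, hi⟩ := hemp
    refine ⟨i, trivial_copy χ i hi ?_ (by omega)⟩
    -- verts.card ≤ N
    have hvt : (Gs i).verts.card ≤ t := by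
      calc (Gs i).verts.card ≤ ∑ j, (Gs j).verts.card :=
            Finset.single_le_sum (f := fun j => (Gs j).verts.card)
              (fun j _ => Nat.zero_le _) (Finset.mem_univ i)
        _ ≤ t := hsum
    rcases Nat.eq_zero_or_pos t with ht0 | ht1
    · omega
    · have : (q*h) ≤ N := by
        calc q*h = (q*h)^1 := (pow_one _).symm
          _ ≤ N := Nat.pow_le_pow_right (by omega) (by nlinarith)
      have : (Gs i).verts.card ≤ h := hcard i
      nlinarith
  · push_neg at hemp
    have h3v : ∀ i, 3 ≤ (Gs i).verts.card := by
      intro i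
      obtain ⟨e, he⟩ := hemp i
      calc 3 = e.card := ((Gs i).edge_card e he).symm
        _ ≤ (Gs i).verts.card := Finset.card_le_card ((Gs i).edge_sub e he)
    have ht3q : 3*q ≤ t := by
      have : (Finset.univ : Finset (Fin q)).card • 3 ≤ ∑ i, (Gs i).verts.card :=
        Finset.card_nsmul_le_sum _ _ _ (fun i _ => h3v i)
      simp only [Finset.card_univ, Fintype.card_fin, smul_eq_mul] at this
      omega
    set p := (2*q)^(q*h) with hp
    have harith : p + q * Nat.choose p h * h ≤ N := base_arith (by omega) hh ht3q
    have hpN : p ≤ N := by omega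
    set P : Finset (Fin N) := (Finset.univ : Finset (Fin p)).map (Fin.castLEEmb hpN) with hP
    have hPcard : P.card = p := by
      rw [hP, Finset.card_map, Finset.card_univ, Fintype.card_fin]
    -- pattern for each vertex y
    have hGR : ∀ y : Fin N, ∃ iT : Fin q × Finset (Fin N), iT.2 ⊆ P ∧ iT.2.card = h ∧
        ∀ u ∈ iT.2, ∀ v ∈ iT.2, u ≠ v → χ {u, v, y} = iT.1 := by
      intro y
      have hsym : ∀ u v : Fin N, χ {u, v, y} = χ {v, u, y} := by
        intro u v
        congr 1
        ext z; simp; tauto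
      obtain ⟨i, T, hT1, hT2, hT3⟩ :=
        GR hq (fun u v => χ {u, v, y}) hsym P (by rw [hPcard])
      exact ⟨(i, T), hT1, hT2, hT3⟩
    choose g hg1 hg2 hg3 using hGR
    set Q : Finset (Fin N) := Finset.univ \ P with hQ
    have hQcard : Q.card = N - p := by
      rw [hQ, Finset.card_sdiff_of_subset (Finset.subset_univ P), Finset.card_univ,
        Fintype.card_fin, hPcard]
    set pats : Finset (Fin q × Finset (Fin N)) :=
      (Finset.univ : Finset (Fin q)) ×ˢ P.powersetCard h with hpats
    have hptsmem : ∀ y ∈ Q, g y ∈ pats := by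
      intro y _
      rw [hpats, Finset.mem_product]
      exact ⟨Finset.mem_univ _, Finset.mem_powersetCard.mpr ⟨hg1 y, hg2 y⟩⟩
    have hptsne : pats.Nonempty := by
      obtain ⟨T0, hT0, hT0c⟩ := Finset.exists_subset_card_eq
        (show h ≤ P.card by rw [hPcard]; calc h ≤ q*h := by nlinarith
                                           _ ≤ (2*q)^(q*h) := by
                                              calc q*h ≤ 2^(q*h) := Nat.lt_two_pow_self (n := q*h) |>.le
                                                _ ≤ (2*q)^(q*h) := Nat.pow_le_pow_left (by omega) _)
      refine ⟨(⟨0, hq⟩, T0), ?_⟩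
      rw [hpats, Finset.mem_product]
      exact ⟨Finset.mem_univ _, Finset.mem_powersetCard.mpr ⟨hT0, hT0c⟩⟩
    have hptscard : pats.card * h ≤ Q.card := by
      rw [hpats, Finset.card_product, Finset.card_univ, Fintype.card_fin,
        Finset.card_powersetCard, hPcard, hQcard]
      omega
    obtain ⟨⟨i, T⟩, hptmem, hfib⟩ :=
      Finset.exists_le_card_fiber_of_mul_le_card_of_maps_to hptsmem hptsne hptscard
    set Ys := Q.filter (fun y => g y = (i, T)) with hYs
    have hTP : T ⊆ P ∧ T.card = h := by
      rw [hpats, Finset.mem_product] at hptmem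
      exact ⟨(Finset.mem_powersetCard.mp hptmem.2).1, (Finset.mem_powersetCard.mp hptmem.2).2⟩
    obtain ⟨W, hWsub, hWone⟩ := hU i
    set B := (Gs i).verts \ W with hB
    obtain ⟨fω, hω1, hω2⟩ := exists_injOn_into W Ys
      (by calc W.card ≤ (Gs i).verts.card := Finset.card_le_card hWsub
            _ ≤ h := hcard i
            _ ≤ Ys.card := hfib) (by omega)
    obtain ⟨fβ, hβ1, hβ2⟩ := exists_injOn_into B T
      (by rw [hTP.2]
          calc B.card ≤ (Gs i).verts.card := Finset.card_le_card (Finset.sdiff_subset)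
            _ ≤ h := hcard i) (by rw [hTP.2]; omega)
    set f : ℕ → Fin N := fun x => if x ∈ W then fω x else fβ x with hf
    have hfW : ∀ x ∈ W, f x = fω x := fun x hx => by rw [hf]; simp [hx]
    have hfB : ∀ x ∈ B, f x = fβ x := fun x hx => by
      rw [hf, hB] at *
      have : x ∉ W := (Finset.mem_sdiff.mp hx).2
      simp [this]
    have hdisjPQ : ∀ a ∈ Ys, ∀ b ∈ T, a ≠ b := by
      intro a ha b hb hab
      have haQ : a ∈ Q := (Finset.mem_filter.mp ha).1
      have hbP : b ∈ P := hTP.1 hb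
      rw [hQ, Finset.mem_sdiff] at haQ
      exact haQ.2 (hab ▸ hbP)
    refine ⟨i, f, ?_, ?_⟩
    · -- injective on verts
      intro a ha b hb hab
      simp only [Finset.mem_coe] at ha hb
      by_cases haW : a ∈ W <;> by_cases hbW : b ∈ W
      · exact hω1 haW hbW (by rwa [hfW a haW, hfW b hbW] at hab)
      · exfalso
        have hbB : b ∈ B := Finset.mem_sdiff.mpr ⟨hb, hbW⟩
        rw [hfW a haW, hfB b hbB] at hab
        exact hdisjPQ _ (hω2 a haW) _ (hβ2 b hbB) hab
      · exfalso
        have haB : a ∈ B := Finset.mem_sdiff.mpr ⟨ha, haW⟩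
        rw [hfB a haB, hfW b hbW] at hab
        exact hdisjPQ _ (hω2 b hbW) _ (hβ2 a haB) hab.symm
      · have haB : a ∈ B := Finset.mem_sdiff.mpr ⟨ha, haW⟩
        have hbB : b ∈ B := Finset.mem_sdiff.mpr ⟨hb, hbW⟩
        exact hβ1 haB hbB (by rwa [hfB a haB, hfB b hbB] at hab)
    · -- edges are monochromatic
      intro e he
      obtain ⟨w, x, y, hwW, hxW, hyW, hxy, hwx, hwy, hedecomp⟩ :=
        card3_split ((Gs i).edge_card e he) (hWone e he)
      have hesub : e ⊆ (Gs i).verts := (Gs i).edge_sub e he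
      have hxB : x ∈ B := Finset.mem_sdiff.mpr ⟨hesub (by rw [hedecomp]; simp), hxW⟩
      have hyB : y ∈ B := Finset.mem_sdiff.mpr ⟨hesub (by rw [hedecomp]; simp), hyW⟩
      rw [hedecomp, triple_image, hfW w hwW, hfB x hxB, hfB y hyB, triple_rot]
      -- χ {fβ x, fβ y, fω w} = i
      have hωYs : fω w ∈ Ys := hω2 w hwW
      have hgw : g (fω w) = (i, T) := (Finset.mem_filter.mp hωYs).2
      have hprop := hg3 (fω w)
      rw [hgw] at hprop
      exact hprop (fβ x) (hβ2 x hxB) (fβ y) (hβ2 y hyB)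
        (fun hc => hxy (hβ1 hxB hyB hc))

-- ===================== arithmetic for the step case =====================

lemma pow_bound_verts {q h t E v : ℕ} (hq : 1 ≤ q) (hh : 3 ≤ h) (hE : 1 ≤ E)
    (hvh : v ≤ h) (hvt : v ≤ t) : v ≤ (q*h)^(E*t) := by
  rcases Nat.eq_zero_or_pos t with ht0 | ht1
  · subst ht0; omega
  · have h1 : q*h ≤ (q*h)^(E*t) := by
      calc q*h = (q*h)^1 := (pow_one _).symm
        _ ≤ (q*h)^(E*t) := Nat.pow_le_pow_right (by nlinarith) (by nlinarith)
    nlinarith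

lemma step_arith {q h t m : ℕ} (hq : 1 ≤ q) (hh : 3 ≤ h) (ht : 3 ≤ t) (htq : t ≤ q*h) :
    (q*h)^(q^m * h^(2*m+2) * (t-1)) ≤ (q*h)^(q^(m+1) * h^(2*m+4) * t)
  ∧ h ≤ (q*h)^(q^m * h^(2*m+2) * (t-1))
  ∧ h ≤ (q*h)^(q^(m+1) * h^(2*m+4) * (t-1))
  ∧ q * ((q*h)^(q^(m+1) * h^(2*m+4) * (t-1)) + h) * ((q*h)^(q^m * h^(2*m+2) * (t-1)))^h
      < (q*h)^(q^(m+1) * h^(2*m+4) * t) := by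
  obtain ⟨s, rfl⟩ : ∃ s, t = s + 1 := ⟨t-1, by omega⟩
  have hs : s + 1 - 1 = s := by omega
  rw [hs]
  have hs2 : 2 ≤ s := by omega
  have hb3 : 3 ≤ q*h := by nlinarith
  have hb1 : 1 ≤ q*h := by omega
  have hE'1 : 0 < q^m * h^(2*m+2) := by positivity
  have hE1 : 0 < q^(m+1) * h^(2*m+4) := by positivity
  have hEE' : q^(m+1) * h^(2*m+4) = (q^m * h^(2*m+2)) * (q * h^2) := by ring
  have hE'E : q^m * h^(2*m+2) ≤ q^(m+1) * h^(2*m+4) := by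
    rw [hEE']
    exact Nat.le_mul_of_pos_right _ (by positivity)
  have hhb : h ≤ q*h := by nlinarith
  have h2 : h ≤ (q*h)^(q^m * h^(2*m+2) * s) := by
    calc h ≤ q*h := hhb
      _ = (q*h)^1 := (pow_one _).symm
      _ ≤ (q*h)^(q^m * h^(2*m+2) * s) := Nat.pow_le_pow_right hb1 (by nlinarith)
  have h3 : h ≤ (q*h)^(q^(m+1) * h^(2*m+4) * s) := by
    calc h ≤ q*h := hhb
      _ = (q*h)^1 := (pow_one _).symm
      _ ≤ (q*h)^(q^(m+1) * h^(2*m+4) * s) := Nat.pow_le_pow_right hb1 (by nlinarith)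
  refine ⟨Nat.pow_le_pow_right hb1 (Nat.mul_le_mul hE'E (by omega)), h2, h3, ?_⟩
  set E' := q^m * h^(2*m+2) with hE'def
  set E := q^(m+1) * h^(2*m+4) with hEdef
  have hexp : E*s + E'*s*h + 2 < E*(s+1) := by
    have e1 : E*(s+1) = E*s + E := by ring
    have e2 : E'*s*h + E'*h ≤ E := by
      have e3 : E'*s*h + E'*h = E'*h*(s+1) := by ring
      rw [e3, hEE']
      calc E'*h*(s+1) ≤ E'*h*(q*h) := Nat.mul_le_mul_left _ htq
        _ = E' * (q*h^2) := by ring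
    have e4 : 3 ≤ E'*h := by nlinarith
    omega
  have hq2 : 2*q ≤ (q*h)^2 := by
    have h9 : 9 ≤ h*h := by nlinarith
    have e5 : (q*h)^2 = q*q*(h*h) := by ring
    rw [e5]
    nlinarith
  calc q * ((q*h)^(E*s) + h) * ((q*h)^(E'*s))^h
      ≤ q * ((q*h)^(E*s) + (q*h)^(E*s)) * ((q*h)^(E'*s))^h := by
        apply Nat.mul_le_mul_right
        apply Nat.mul_le_mul_left
        omega
    _ = 2*q * ((q*h)^(E*s) * (q*h)^(E'*s*h)) := by
        rw [← pow_mul]; ring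
    _ ≤ (q*h)^2 * ((q*h)^(E*s) * (q*h)^(E'*s*h)) := Nat.mul_le_mul_right _ hq2
    _ = (q*h)^(E*s + E'*s*h + 2) := by
        rw [pow_add, pow_add]; ring
    _ < (q*h)^(E*(s+1)) := Nat.pow_lt_pow_right (by omega) hexp

-- ===================== the induction step =====================

lemma step_main {h m : ℕ} (hh : 3 ≤ h)
    (IHlow : ∀ t q (Gs : Fin q → ThreeGraph), (∀ i, MemU (m+1) (Gs i)) →
      (∀ i, (Gs i).verts.card ≤ h) → ((∑ i, (Gs i).verts.card) ≤ t) → t ≤ q*h →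
      RamseyProp Gs ((q*h)^(q^m * h^(2*m+2) * t))) :
    ∀ t q (Gs : Fin q → ThreeGraph), (∀ i, MemU (m+2) (Gs i)) →
      (∀ i, (Gs i).verts.card ≤ h) → ((∑ i, (Gs i).verts.card) ≤ t) → t ≤ q*h →
      RamseyProp Gs ((q*h)^(q^(m+1) * h^(2*m+4) * t)) := by
  classical
  intro t
  induction t using Nat.strong_induction_on with
  | _ t IHt =>
  intro q Gs hU hcard hsum htq
  rcases Nat.eq_zero_or_pos q with hq0 | hq
  · subst hq0
    intro χ
    exact (χ ∅).elim0
  set E' := q^m * h^(2*m+2) with hE'def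
  set E := q^(m+1) * h^(2*m+4) with hEdef
  set N := (q*h)^(E * t) with hNdef
  have hb1 : 1 ≤ q*h := by nlinarith
  have hN1 : 1 ≤ N := Nat.one_le_pow _ _ (by omega)
  have hE1 : 1 ≤ E := by
    have : 0 < E := by rw [hEdef]; positivity
    omega
  by_cases hemp : ∃ i, (Gs i).edges = ∅
  · obtain ⟨i, hi⟩ := hemp
    intro χ
    refine ⟨i, trivial_copy χ i hi ?_ (by omega)⟩
    have hvt : (Gs i).verts.card ≤ t := by
      calc (Gs i).verts.card ≤ ∑ j, (Gs j).verts.card :=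
            Finset.single_le_sum (f := fun j => (Gs j).verts.card)
              (fun j _ => Nat.zero_le _) (Finset.mem_univ i)
        _ ≤ t := hsum
    exact pow_bound_verts hq hh hE1 (hcard i) hvt
  push_neg at hemp
  have h3v : ∀ i, 3 ≤ (Gs i).verts.card := by
    intro i
    obtain ⟨e, he⟩ := hemp i
    calc 3 = e.card := ((Gs i).edge_card e he).symm
      _ ≤ (Gs i).verts.card := Finset.card_le_card ((Gs i).edge_sub e he)
  have ht3q : 3*q ≤ t := by
    have : (Finset.univ : Finset (Fin q)).card • 3 ≤ ∑ i, (Gs i).verts.card :=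
      Finset.card_nsmul_le_sum _ _ _ (fun i _ => h3v i)
    simp only [Finset.card_univ, Fintype.card_fin, smul_eq_mul] at this
    omega
  have ht3 : 3 ≤ t := by omega
  -- destructure membership
  have hdata : ∀ i, ∃ (bb : Bool) (H F : ThreeGraph) (U : Finset ℕ) (v : ℕ),
      (bb = true → H = Gs i ∧ MemU (m+1) (Gs i)) ∧
      (bb = false → MemU (m+1) H ∧ MemU (m+2) F ∧
        U ⊆ (Gs i).verts ∧ 2 ≤ U.card ∧ U.card < (Gs i).verts.card ∧
        (∀ e ∈ (Gs i).edges, (e ∩ U).card ≠ 2) ∧ v ∉ (Gs i).verts ∧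
        H.verts = ((Gs i).verts \ U) ∪ {v} ∧
        H.edges = (Gs i).edges.filter (fun e => e ∩ U = ∅) ∪
          ((Gs i).edges.filter (fun e => (e ∩ U).card = 1)).image (fun e => (e \ U) ∪ {v}) ∧
        F.verts = U ∧ F.edges = (Gs i).edges.filter (fun e => e ⊆ U)) := by
    intro i
    rcases memU_step (hU i) with hlow | ⟨H, F, hred, hH, hF⟩
    · exact ⟨true, Gs i, Gs i, ∅, 0, fun _ => ⟨rfl, hlow⟩, by simp⟩
    · obtain ⟨U, v, h1, h2, h3, h4, h5, h6, h7, h8, h9⟩ := hred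
      exact ⟨false, H, F, U, v, by simp,
        fun _ => ⟨hH, hF, h1, h2, h3, h4, h5, h6, h7, h8, h9⟩⟩
  choose bb Hs Fs Us vs hbT hbF using hdata
  -- basic consequences
  have hHmem : ∀ i, MemU (m+1) (Hs i) := by
    intro i
    cases hbi : bb i
    · exact ((hbF i) hbi).1
    · rw [((hbT i) hbi).1]
      exact ((hbT i) hbi).2
  have hHvcard : ∀ i, bb i = false →
      (Hs i).verts.card + (Us i).card = (Gs i).verts.card + 1 := by
    intro i hbi
    obtain ⟨_, _, hUsub, _, _, _, hvnot, hHverts, _, _, _⟩ := (hbF i) hbi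
    rw [hHverts, Finset.card_union_of_disjoint, Finset.card_sdiff_of_subset hUsub,
      Finset.card_singleton]
    · have : (Us i).card ≤ (Gs i).verts.card := Finset.card_le_card hUsub
      omega
    · simp only [Finset.disjoint_singleton_right, Finset.mem_sdiff]
      intro hc
      exact hvnot hc.1
  have hHcard : ∀ i, (Hs i).verts.card ≤ h := by
    intro i
    cases hbi : bb i
    · have h1 := hHvcard i hbi
      have h2 := ((hbF i) hbi).2.2.2.1
      have := hcard i
      omega
    · rw [((hbT i) hbi).1]; exact hcard i
  -- case : all coordinates at lower level
  by_cases hall : ∀ i, bb i = true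
  · have hlow : ∀ i, MemU (m+1) (Gs i) := fun i => ((hbT i) (hall i)).2
    have hR := IHlow t q Gs hlow hcard hsum htq
    have hle : q^m * h^(2*m+2) * t ≤ E * t := by
      apply Nat.mul_le_mul_right
      rw [hEdef]
      exact Nat.mul_le_mul (Nat.pow_le_pow_right (by omega) (by omega))
        (Nat.pow_le_pow_right (by omega) (by omega))
    exact ramsey_mono hR (Nat.one_le_pow _ _ (by omega)) (Nat.pow_le_pow_right hb1 hle)
  push_neg at hall
  obtain ⟨i₀, hbi₀⟩ := hall
  have hbi₀' : bb i₀ = false := by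
    cases hbi : bb i₀
    · rfl
    · exact absurd hbi hbi₀
  -- sum over the H's decreases
  have hsumH : (∑ i, (Hs i).verts.card) ≤ t - 1 := by
    have hterm : ∀ i, (Hs i).verts.card ≤ (Gs i).verts.card := by
      intro i
      cases hbi : bb i
      · have h1 := hHvcard i hbi
        have h2 := ((hbF i) hbi).2.2.2.1
        omega
      · rw [((hbT i) hbi).1]
    have hstrict : (Hs i₀).verts.card < (Gs i₀).verts.card := by
      have h1 := hHvcard i₀ hbi₀'
      have h2 := ((hbF i₀) hbi₀').2.2.2.1
      omega
    have : (∑ i, (Hs i).verts.card) < ∑ i, (Gs i).verts.card :=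
      Finset.sum_lt_sum (fun i _ => hterm i) ⟨i₀, Finset.mem_univ i₀, hstrict⟩
    omega
  -- parameters
  obtain ⟨hpN, hhp, hhn₁, hkey⟩ := step_arith (q := q) (h := h) (t := t) (m := m) hq hh ht3 htq
  rw [← hE'def] at hpN hhp hkey
  rw [← hEdef] at hpN hhn₁ hkey
  rw [← hNdef] at hpN hkey
  set p := (q*h)^(E' * (t-1)) with hpdef
  set n₁ := (q*h)^(E * (t-1)) with hn₁def
  have hp1 : 1 ≤ p := Nat.one_le_pow _ _ (by omega)
  have hn₁1 : 1 ≤ n₁ := Nat.one_le_pow _ _ (by omega)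
  have hRHs : RamseyProp Hs p :=
    IHlow (t-1) q Hs hHmem hHcard hsumH (by omega)
  intro χ
  have d₀ : Fin N := ⟨0, by omega⟩
  -- choose a copy in every p-subset
  have hcopyP : ∀ P : Finset (Fin N), ∃ ifc : Fin q × (ℕ → Fin N),
      P ∈ Finset.powersetCard p (Finset.univ : Finset (Fin N)) →
        (Set.InjOn ifc.2 ↑(Hs ifc.1).verts ∧ (∀ x ∈ (Hs ifc.1).verts, ifc.2 x ∈ P) ∧
         ∀ e ∈ (Hs ifc.1).edges, χ (e.image ifc.2) = ifc.1) := by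
    intro P
    by_cases hPm : P ∈ Finset.powersetCard p (Finset.univ : Finset (Fin N))
    · have hcP : p ≤ P.card := le_of_eq (Finset.mem_powersetCard.mp hPm).2.symm
      obtain ⟨i, f, h1, h2, h3⟩ := ramsey_subset hRHs χ P hcP (by omega)
      exact ⟨(i, f), fun _ => ⟨h1, h2, h3⟩⟩
    · exact ⟨(⟨0, hq⟩, fun _ => d₀), fun hm => absurd hm hPm⟩
  choose cp hcp using hcopyP
  -- escape : some p-set yields a genuine low-level graph
  by_cases hesc : ∃ P ∈ Finset.powersetCard p (Finset.univ : Finset (Fin N)),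
      bb (cp P).1 = true
  · obtain ⟨P, hPm, htrue⟩ := hesc
    obtain ⟨h1, _, h3⟩ := hcp P hPm
    refine ⟨(cp P).1, (cp P).2, ?_, ?_⟩
    · rw [← ((hbT (cp P).1) htrue).1]; exact h1
    · rw [← ((hbT (cp P).1) htrue).1]; exact h3
  push_neg at hesc
  have hbfalse : ∀ P ∈ Finset.powersetCard p (Finset.univ : Finset (Fin N)),
      bb (cp P).1 = false := by
    intro P hP
    have := hesc P hP
    cases hb : bb (cp P).1
    · rfl
    · exact absurd hb this
  have hRed : ∀ (j : Fin q), bb j = false → vs j ∈ (Hs j).verts := by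
    intro j hbj
    obtain ⟨_,_,_,_,_,_,_, hHverts, _,_,_⟩ := hbF j hbj
    rw [hHverts]
    exact Finset.mem_union_right _ (Finset.mem_singleton_self _)
  -- normalized base of each copy
  set basef : Finset (Fin N) → (ℕ → Fin N) := fun P => fun x =>
    if x ∈ (Hs (cp P).1).verts.erase (vs (cp P).1) then (cp P).2 x else d₀ with hbasef
  set θ : Finset (Fin N) → Fin q × (ℕ → Fin N) × Fin N := fun P =>
    ((cp P).1, basef P, (cp P).2 (vs (cp P).1)) with hθ
  set ext : Fin q → (ℕ → Fin N) → Finset (Fin N) := fun j g =>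
    Finset.univ.filter (fun u => ∀ e ∈ (Hs j).edges, vs j ∈ e →
      χ (e.image (Function.update g (vs j) u)) = j) with hext
  have hbasefP : ∀ P, ∀ x ∈ (Hs (cp P).1).verts.erase (vs (cp P).1),
      basef P x = (cp P).2 x := by
    intro P x hx
    rw [hbasef]
    simp only [if_pos hx]
  have hbasefP' : ∀ P, ∀ x, x ∉ (Hs (cp P).1).verts.erase (vs (cp P).1) →
      basef P x = d₀ := by
    intro P x hx
    rw [hbasef]
    simp only [if_neg hx]
  have hextmem : ∀ P ∈ Finset.powersetCard p (Finset.univ : Finset (Fin N)),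
      (cp P).2 (vs (cp P).1) ∈ ext (cp P).1 (basef P) := by
    intro P hP
    obtain ⟨hinj, hin, hmono⟩ := hcp P hP
    rw [hext]
    rw [Finset.mem_filter]
    refine ⟨Finset.mem_univ _, ?_⟩
    intro e he hv
    have himg : e.image (Function.update (basef P) (vs (cp P).1) ((cp P).2 (vs (cp P).1)))
        = e.image (cp P).2 := by
      apply Finset.image_congr
      intro x hx
      by_cases hxv : x = vs (cp P).1
      · subst hxv; rw [Function.update_self]
      · rw [Function.update_of_ne hxv]
        have hxH : x ∈ (Hs (cp P).1).verts := (Hs (cp P).1).edge_sub e he hx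
        exact hbasefP P x (Finset.mem_erase.mpr ⟨hxv, hxH⟩)
    rw [himg]
    exact hmono e he
  by_cases hbig : ∃ P ∈ Finset.powersetCard p (Finset.univ : Finset (Fin N)),
      n₁ + h ≤ (ext (cp P).1 (basef P)).card
  · -- ======== assembly ========
    obtain ⟨P₀, hP₀m, hbigc⟩ := hbig
    obtain ⟨hinj₀, hin₀, hmono₀⟩ := hcp P₀ hP₀m
    have hbbj : bb (cp P₀).1 = false := hbfalse P₀ hP₀m
    set j := (cp P₀).1 with hjdef
    obtain ⟨hHmem_j, hFmem_j, hUsub, hU2, hUlt, hcollapse, hvnot, hHverts, hHedges,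
      hFverts, hFedges⟩ := hbF j hbbj
    set g := basef P₀ with hgdef
    set E₀ := (Hs j).verts.erase (vs j) with hE₀def
    set img := E₀.image g with himgdef
    set X := ext j g with hXdef
    set X' := X \ img with hX'def
    have hvsj : vs j ∈ (Hs j).verts := hRed j hbbj
    have hE₀card : E₀.card = (Hs j).verts.card - 1 := Finset.card_erase_of_mem hvsj
    have himgcard : img.card ≤ h - 1 := by
      calc img.card ≤ E₀.card := Finset.card_image_le
        _ = (Hs j).verts.card - 1 := hE₀card
        _ ≤ h - 1 := by have := hHcard j; omega
    have hX'card : n₁ ≤ X'.card := by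
      have h1 : X.card - img.card ≤ X'.card := Finset.le_card_sdiff img X
      omega
    have hGnotU_E₀ : ∀ x ∈ (Gs j).verts, x ∉ Us j → x ∈ E₀ := by
      intro x hx hxU
      rw [hE₀def, Finset.mem_erase, hHverts]
      constructor
      · intro hxv
        rw [hxv] at hx
        exact hvnot hx
      · exact Finset.mem_union_left _ (Finset.mem_sdiff.mpr ⟨hx, hxU⟩)
    have hgf : ∀ x ∈ E₀, g x = (cp P₀).2 x := fun x hx => hbasefP P₀ x hx
    -- inner Ramsey call on X'
    set Gs' := Function.update Gs j (Fs j) with hGs'def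
    have hGs'mem : ∀ i, MemU (m+2) (Gs' i) := by
      intro i
      by_cases hij : i = j
      · subst hij
        rw [hGs'def, Function.update_self]
        exact hFmem_j
      · rw [hGs'def, Function.update_of_ne hij]
        exact hU i
    have hFvcard : (Fs j).verts.card + 1 ≤ (Gs j).verts.card := by
      rw [hFverts]
      omega
    have hGs'card : ∀ i, (Gs' i).verts.card ≤ h := by
      intro i
      by_cases hij : i = j
      · subst hij
        rw [hGs'def, Function.update_self]
        have := hcard j
        omega
      · rw [hGs'def, Function.update_of_ne hij]
        exact hcard i
    have hGs'sum : (∑ i, (Gs' i).verts.card) ≤ t - 1 := by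
      have e1 : (∑ i, (Gs' i).verts.card)
          = ∑ i, Function.update (fun i => (Gs i).verts.card) j ((Fs j).verts.card) i := by
        apply Finset.sum_congr rfl
        intro i _
        by_cases hij : i = j
        · subst hij
          rw [hGs'def, Function.update_self, Function.update_self]
        · rw [hGs'def, Function.update_of_ne hij, Function.update_of_ne hij]
      have e2 := Finset.sum_update_of_mem (Finset.mem_univ j)
        (fun i => (Gs i).verts.card) ((Fs j).verts.card)
      have e3 : (Gs j).verts.card + ∑ i ∈ Finset.univ.erase j, (Gs i).verts.card
          = ∑ i, (Gs i).verts.card :=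
        Finset.add_sum_erase Finset.univ (fun i => (Gs i).verts.card) (Finset.mem_univ j)
      rw [e1, e2]
      rw [← Finset.erase_eq]
      omega
    have hinner : RamseyProp Gs' n₁ :=
      IHt (t-1) (by omega) q Gs' hGs'mem hGs'card hGs'sum (by omega)
    obtain ⟨i₂, hcopy2⟩ := ramsey_subset hinner χ X' hX'card (by omega)
    by_cases hij : i₂ = j
    · -- the F-copy sits inside X' : assemble a copy of Gs j
      subst hij
      rw [hGs'def, Function.update_self] at hcopy2
      obtain ⟨fF, hFinj, hFin, hFmono⟩ := hcopy2
      set fG : ℕ → Fin N := fun x => if x ∈ Us j then fF x else g x with hfGdef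
      have hfGU : ∀ x ∈ Us j, fG x = fF x := by
        intro x hx
        rw [hfGdef]
        simp [hx]
      have hfGnU : ∀ x, x ∉ Us j → fG x = g x := by
        intro x hx
        rw [hfGdef]
        simp [hx]
      have hfFX' : ∀ x ∈ Us j, fF x ∈ X' := by
        intro x hx
        apply hFin
        rw [hFverts]
        exact hx
      have hgimg : ∀ x ∈ (Gs j).verts, x ∉ Us j → g x ∈ img := by
        intro x hx hxU
        rw [himgdef]
        exact Finset.mem_image_of_mem g (hGnotU_E₀ x hx hxU)
      have hX'img : ∀ z ∈ X', z ∉ img := fun z hz => (Finset.mem_sdiff.mp hz).2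
      refine ⟨j, fG, ?_, ?_⟩
      · -- injectivity
        intro a ha b hb hab
        simp only [Finset.mem_coe] at ha hb
        by_cases haU : a ∈ Us j <;> by_cases hbU : b ∈ Us j
        · refine hFinj ?_ ?_ ?_
          · rw [hFverts]; exact haU
          · rw [hFverts]; exact hbU
          · rwa [hfGU a haU, hfGU b hbU] at hab
        · exfalso
          rw [hfGU a haU, hfGnU b hbU] at hab
          exact hX'img _ (hfFX' a haU) (hab ▸ hgimg b hb hbU)
        · exfalso
          rw [hfGnU a haU, hfGU b hbU] at hab
          exact hX'img _ (hfFX' b hbU) (hab ▸ hgimg a ha haU)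
        · have haE : a ∈ E₀ := hGnotU_E₀ a ha haU
          have hbE : b ∈ E₀ := hGnotU_E₀ b hb hbU
          rw [hfGnU a haU, hfGnU b hbU, hgf a haE, hgf b hbE] at hab
          exact hinj₀ (Finset.mem_coe.mpr (Finset.mem_of_mem_erase haE))
            (Finset.mem_coe.mpr (Finset.mem_of_mem_erase hbE)) hab
      · -- edges
        intro e he
        have he3 := (Gs j).edge_card e he
        have heG := (Gs j).edge_sub e he
        have hcas : (e ∩ Us j).card = 0 ∨ (e ∩ Us j).card = 1 ∨ (e ∩ Us j).card = 3 := by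
          have h1 : (e ∩ Us j).card ≤ 3 := by
            rw [← he3]
            exact Finset.card_le_card Finset.inter_subset_left
          have h2 := hcollapse e he
          omega
        rcases hcas with hc0 | hc1 | hc3
        · -- no vertex in U : an H-edge avoiding v*
          have hie : e ∩ Us j = ∅ := Finset.card_eq_zero.mp hc0
          have hnotU : ∀ x ∈ e, x ∉ Us j := by
            intro x hx hxU
            have : x ∈ e ∩ Us j := Finset.mem_inter.mpr ⟨hx, hxU⟩
            rw [hie] at this
            exact absurd this (Finset.notMem_empty x)
          have heH : e ∈ (Hs j).edges := by
            rw [hHedges]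
            exact Finset.mem_union_left _ (Finset.mem_filter.mpr ⟨he, hie⟩)
          have himge : e.image fG = e.image (cp P₀).2 := by
            apply Finset.image_congr
            intro x hx
            have hxU := hnotU x hx
            have hxE : x ∈ E₀ := hGnotU_E₀ x (heG hx) hxU
            rw [hfGnU x hxU, hgf x hxE]
          rw [himge]
          exact hmono₀ e heH
        · -- exactly one vertex in U
          obtain ⟨u, x, y, huU, hxU, hyU, hxy, hux, huy, hedec⟩ := card3_split he3 hc1
          have hxG : x ∈ (Gs j).verts := heG (by rw [hedec]; simp)
          have hyG : y ∈ (Gs j).verts := heG (by rw [hedec]; simp)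
          have hxE : x ∈ E₀ := hGnotU_E₀ x hxG hxU
          have hyE : y ∈ E₀ := hGnotU_E₀ y hyG hyU
          have hu' : fF u ∈ X' := hfFX' u huU
          have huX : fF u ∈ X := (Finset.mem_sdiff.mp hu').1
          have hediff : e \ Us j = {x, y} := by
            rw [hedec]
            ext z
            simp only [Finset.mem_sdiff, Finset.mem_insert, Finset.mem_singleton]
            constructor
            · rintro ⟨(rfl | rfl | rfl), hz⟩
              · exact absurd huU hz
              · exact Or.inl rfl
              · exact Or.inr rfl
            · rintro (rfl | rfl)
              · exact ⟨Or.inr (Or.inl rfl), hxU⟩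
              · exact ⟨Or.inr (Or.inr rfl), hyU⟩
          have he' : (e \ Us j) ∪ {vs j} ∈ (Hs j).edges := by
            rw [hHedges]
            apply Finset.mem_union_right
            exact Finset.mem_image.mpr ⟨e, Finset.mem_filter.mpr ⟨he, hc1⟩, rfl⟩
          have hvse' : vs j ∈ (e \ Us j) ∪ {vs j} :=
            Finset.mem_union_right _ (Finset.mem_singleton_self _)
          -- extension property of fF u
          have hXm := huX
          rw [hXdef] at hXm
          simp only [hext, Finset.mem_filter] at hXm
          have hχ := hXm.2 _ he' hvse'
          -- compute the image in hχ
          have hxvs : x ≠ vs j := by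
            intro hxv
            rw [hxv] at hxG
            exact hvnot hxG
          have hyvs : y ≠ vs j := by
            intro hyv
            rw [hyv] at hyG
            exact hvnot hyG
          have hset : (e \ Us j) ∪ {vs j} = ({x, y, vs j} : Finset ℕ) := by
            rw [hediff]
            ext z
            simp [Finset.mem_union, Finset.mem_insert]
          rw [hset, triple_image, Function.update_of_ne hxvs, Function.update_of_ne hyvs,
            Function.update_self] at hχ
          -- compute the image of e under fG
          have hfGu : fG u = fF u := hfGU u huU
          have hfGx : fG x = g x := hfGnU x hxU
          have hfGy : fG y = g y := hfGnU y hyU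
          rw [hedec, triple_image, hfGu, hfGx, hfGy, triple_rot]
          exact hχ
        · -- edge inside U : an F-edge
          have hesub : e ⊆ Us j := by
            have h1 : e ∩ Us j ⊆ e := Finset.inter_subset_left
            have h2 : e ∩ Us j = e := Finset.eq_of_subset_of_card_le h1 (by omega)
            intro z hz
            rw [← h2] at hz
            exact (Finset.mem_inter.mp hz).2
          have heF : e ∈ (Fs j).edges := by
            rw [hFedges]
            exact Finset.mem_filter.mpr ⟨he, hesub⟩
          have himge : e.image fG = e.image fF := by
            apply Finset.image_congr
            intro z hz
            exact hfGU z (hesub hz)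
          rw [himge]
          exact hFmono e heF
    · -- the inner copy is one of the original graphs
      rw [hGs'def, Function.update_of_ne hij] at hcopy2
      exact ⟨i₂, copyIn_monoCopy hcopy2⟩
  · -- ======== counting contradiction ========
    exfalso
    push_neg at hbig
    set Φ := Finset.powersetCard p (Finset.univ : Finset (Fin N)) with hΦ
    set w : Fin q → ℕ := fun j => (Hs j).verts.card with hw
    have hΦcard : Φ.card = Nat.choose N p := by
      rw [hΦ, Finset.card_powersetCard, Finset.card_univ, Fintype.card_fin]
    have hmapsθ : ∀ P ∈ Φ, θ P ∈ Φ.image θ := fun P hP => Finset.mem_image_of_mem θ hP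
    have hfibsum : Φ.card = ∑ c ∈ Φ.image θ, (Φ.filter (fun P => θ P = c)).card :=
      Finset.card_eq_sum_card_fiberwise hmapsθ
    -- components of θ
    have hcomp : ∀ P c, θ P = c →
        (cp P).1 = c.1 ∧ basef P = c.2.1 ∧ (cp P).2 (vs (cp P).1) = c.2.2 := by
      intro P c hPc
      rw [← hPc]
      exact ⟨rfl, rfl, rfl⟩
    -- fiber bound
    have hfiber : ∀ c ∈ Φ.image θ, (Φ.filter (fun P => θ P = c)).card
        ≤ Nat.choose (N - w c.1) (p - w c.1) := by
      intro c hc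
      obtain ⟨Pc, hPc, hθPc⟩ := Finset.mem_image.mp hc
      obtain ⟨hc1, hc2, hc3⟩ := hcomp Pc c hθPc
      obtain ⟨hinjc, hinc, _⟩ := hcp Pc hPc
      set R : Finset (Fin N) :=
        (((Hs c.1).verts.erase (vs c.1)).image c.2.1) ∪ {c.2.2} with hR
      have hvsc : vs c.1 ∈ (Hs c.1).verts := by
        apply hRed
        rw [← hc1]
        exact hbfalse Pc hPc
      have hagree : ∀ x ∈ (Hs c.1).verts.erase (vs c.1), c.2.1 x = (cp Pc).2 x := by
        intro x hx
        rw [← hc2]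
        apply hbasefP
        rw [hc1]
        exact hx
      have himgcard : (((Hs c.1).verts.erase (vs c.1)).image c.2.1).card
          = w c.1 - 1 := by
        rw [Finset.card_image_of_injOn, Finset.card_erase_of_mem hvsc]
        intro x hx y hy hxy
        simp only [Finset.mem_coe] at hx hy
        rw [hagree x hx, hagree y hy] at hxy
        have hx' : x ∈ (Hs c.1).verts := Finset.mem_of_mem_erase hx
        have hy' : y ∈ (Hs c.1).verts := Finset.mem_of_mem_erase hy
        rw [← hc1] at hx' hy'
        exact hinjc hx' hy' hxy
      have hnotmem : c.2.2 ∉ ((Hs c.1).verts.erase (vs c.1)).image c.2.1 := by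
        intro hmem
        obtain ⟨x, hx, hxe⟩ := Finset.mem_image.mp hmem
        rw [hagree x hx, ← hc3] at hxe
        have hx' : x ∈ (Hs c.1).verts := Finset.mem_of_mem_erase hx
        rw [← hc1] at hx'
        have hvs' : vs (cp Pc).1 ∈ (Hs (cp Pc).1).verts := by rw [hc1]; exact hvsc
        have := hinjc hx' hvs' hxe
        rw [hc1] at this
        exact (Finset.mem_erase.mp hx).1 this
      have hRcard : R.card = w c.1 := by
        rw [hR, Finset.card_union_of_disjoint (by
          simp only [Finset.disjoint_singleton_right]
          exact hnotmem), himgcard, Finset.card_singleton]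
        have hw1 : 1 ≤ w c.1 := Finset.card_pos.mpr ⟨vs c.1, hvsc⟩
        omega
      have hsub : Φ.filter (fun P => θ P = c) ⊆ Φ.filter (fun P => R ⊆ P) := by
        intro P hP
        rw [Finset.mem_filter] at hP ⊢
        obtain ⟨hPm, hPc'⟩ := hP
        obtain ⟨hd1, hd2, hd3⟩ := hcomp P c hPc'
        obtain ⟨_, hinP, _⟩ := hcp P hPm
        refine ⟨hPm, ?_⟩
        rw [hR]
        apply Finset.union_subset
        · intro z hz
          obtain ⟨x, hx, rfl⟩ := Finset.mem_image.mp hz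
          have : c.2.1 x = (cp P).2 x := by
            rw [← hd2]
            apply hbasefP
            rw [hd1]
            exact hx
          rw [this]
          apply hinP
          rw [hd1]
          exact Finset.mem_of_mem_erase hx
        · intro z hz
          rw [Finset.mem_singleton] at hz
          subst hz
          rw [← hd3]
          apply hinP
          apply hRed
          exact hbfalse P hPm
      calc (Φ.filter (fun P => θ P = c)).card
          ≤ (Φ.filter (fun P => R ⊆ P)).card := Finset.card_le_card hsub
        _ ≤ Nat.choose (N - w c.1) (p - w c.1) := by
            rw [hΦ]
            exact card_supersets_le R hRcard
    -- group by color
    have hgroup : ∑ c ∈ Φ.image θ, Nat.choose (N - w c.1) (p - w c.1)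
        = ∑ j : Fin q, ∑ c ∈ (Φ.image θ).filter (fun c => c.1 = j),
            Nat.choose (N - w c.1) (p - w c.1) :=
      (Finset.sum_fiberwise_of_maps_to (fun c _ => Finset.mem_univ c.1) _).symm
    -- per-color bound
    have hperj : ∀ j : Fin q,
        (∑ c ∈ (Φ.image θ).filter (fun c => c.1 = j),
          Nat.choose (N - w c.1) (p - w c.1)) * N
        ≤ (n₁ + h) * p^h * Nat.choose N p := by
      intro j
      set Ij := (Φ.image θ).filter (fun c => c.1 = j) with hIj
      have hsumc : ∑ c ∈ Ij, Nat.choose (N - w c.1) (p - w c.1)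
          = Ij.card * Nat.choose (N - w j) (p - w j) := by
        rw [Finset.sum_congr rfl (fun c hc => by
          rw [(Finset.mem_filter.mp hc).2]), Finset.sum_const, smul_eq_mul]
      rw [hsumc]
      rcases Finset.eq_empty_or_nonempty Ij with hIe | hIne
      · rw [hIe]
        simp
      · -- witness facts for j
        obtain ⟨c₀, hc₀⟩ := hIne
        rw [hIj, Finset.mem_filter] at hc₀
        obtain ⟨hc₀I, hc₀j⟩ := hc₀
        obtain ⟨P₁, hP₁, hθP₁⟩ := Finset.mem_image.mp hc₀I
        have hbbj : bb j = false := by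
          rw [← hc₀j, ← (hcomp P₁ c₀ hθP₁).1]
          exact hbfalse P₁ hP₁
        have hvsj : vs j ∈ (Hs j).verts := hRed j hbbj
        have hwj1 : 1 ≤ w j := Finset.card_pos.mpr ⟨vs j, hvsj⟩
        have hwjh : w j ≤ h := hHcard j
        -- |Ij| bound
        have hcardIj : Ij.card ≤ N^(w j - 1) * (n₁ + h) := by
          -- project to snd
          have hinj2 : Set.InjOn (Prod.snd : Fin q × (ℕ → Fin N) × Fin N → (ℕ → Fin N) × Fin N) ↑Ij := by
            intro c1 hc1 c2 hc2 hcc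
            simp only [Finset.mem_coe, hIj, Finset.mem_filter] at hc1 hc2
            have e1 : c1 = (j, c1.2) := by
              rw [← hc1.2]
            have e2 : c2 = (j, c2.2) := by
              rw [← hc2.2]
            rw [e1, e2, hcc]
          have hcard2 : Ij.card = (Ij.image Prod.snd).card :=
            (Finset.card_image_of_injOn hinj2).symm
          set J := Ij.image Prod.snd with hJ
          -- for each pair in J, its snd is an extension of its fst
          have hJfacts : ∀ gu ∈ J, (∃ P ∈ Φ, (cp P).1 = j ∧ basef P = gu.1)
              ∧ gu.2 ∈ ext j gu.1 := by
            intro gu hgu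
            obtain ⟨c, hcI, hcgu⟩ := Finset.mem_image.mp hgu
            rw [hIj, Finset.mem_filter] at hcI
            obtain ⟨hcI', hcj⟩ := hcI
            obtain ⟨P, hPm, hθP⟩ := Finset.mem_image.mp hcI'
            obtain ⟨hd1, hd2, hd3⟩ := hcomp P c hθP
            have hgu1 : basef P = gu.1 := by rw [hd2, hcgu]
            have hgu2 : (cp P).2 (vs (cp P).1) = gu.2 := by rw [hd3, hcgu]
            have hd1' : (cp P).1 = j := by rw [hd1, hcj]
            constructor
            · exact ⟨P, hPm, hd1', hgu1⟩
            · have := hextmem P hPm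
              rw [hgu2, hgu1, hd1'] at this
              exact this
          -- fiberwise count of J over fst
          have hJsum : J.card = ∑ g ∈ J.image Prod.fst,
              (J.filter (fun gu => gu.1 = g)).card :=
            Finset.card_eq_sum_card_fiberwise
              (fun gu hgu => Finset.mem_image_of_mem Prod.fst hgu)
          have hJfib : ∀ g ∈ J.image Prod.fst,
              (J.filter (fun gu => gu.1 = g)).card ≤ n₁ + h := by
            intro g hg
            obtain ⟨gu₀, hgu₀, hgu₀g⟩ := Finset.mem_image.mp hg
            obtain ⟨⟨P₂, hP₂m, hP₂j, hP₂g⟩, _⟩ := hJfacts gu₀ hgu₀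
            have hextcard : (ext j g).card ≤ n₁ + h := by
              have := hbig P₂ hP₂m
              rw [hP₂j, hP₂g, hgu₀g] at this
              omega
            refine le_trans ?_ hextcard
            apply Finset.card_le_card_of_injOn Prod.snd
            · intro gu hgu
              rw [Finset.mem_coe, Finset.mem_filter] at hgu
              have := (hJfacts gu hgu.1).2
              rw [hgu.2] at this
              exact this
            · intro gu1 hgu1 gu2 hgu2 hgg
              simp only [Finset.mem_coe, Finset.mem_filter] at hgu1 hgu2
              have e1 : gu1 = (g, gu1.2) := by rw [← hgu1.2]
              have e2 : gu2 = (g, gu2.2) := by rw [← hgu2.2]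
              rw [e1, e2, hgg]
          have hJfst : (J.image Prod.fst).card ≤ N^(w j - 1) := by
            have hEset : ((Hs j).verts.erase (vs j)).card = w j - 1 :=
              Finset.card_erase_of_mem hvsj
            apply le_trans (Finset.card_le_card_of_injOn
              (fun g => (fun x : ((Hs j).verts.erase (vs j) : Finset ℕ) => g x.val))
              (fun g _ => Finset.mem_univ _) ?_) ?_
            · -- injectivity on normalized functions
              intro g1 hg1 g2 hg2 hgg
              simp only [Finset.mem_coe] at hg1 hg2
              obtain ⟨gu1, hgu1, hgu1g⟩ := Finset.mem_image.mp hg1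
              obtain ⟨gu2, hgu2, hgu2g⟩ := Finset.mem_image.mp hg2
              obtain ⟨⟨Pa, hPam, hPaj, hPag⟩, _⟩ := hJfacts gu1 hgu1
              obtain ⟨⟨Pb, hPbm, hPbj, hPbg⟩, _⟩ := hJfacts gu2 hgu2
              funext x
              by_cases hx : x ∈ (Hs j).verts.erase (vs j)
              · exact congrFun hgg ⟨x, hx⟩
              · rw [← hgu1g, ← hPag, ← hgu2g, ← hPbg]
                rw [hbasefP' Pa x (by rwa [hPaj]), hbasefP' Pb x (by rwa [hPbj])]
            · rw [Finset.card_univ, Fintype.card_fun, Fintype.card_fin,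
                Fintype.card_coe, hEset]
          calc Ij.card = J.card := hcard2
            _ = ∑ g ∈ J.image Prod.fst, (J.filter (fun gu => gu.1 = g)).card := hJsum
            _ ≤ ∑ g ∈ J.image Prod.fst, (n₁ + h) := Finset.sum_le_sum hJfib
            _ = (J.image Prod.fst).card * (n₁ + h) := by
                rw [Finset.sum_const, smul_eq_mul]
            _ ≤ N^(w j - 1) * (n₁ + h) := Nat.mul_le_mul_right _ hJfst
        -- combine
        have hdc : N^(w j) * Nat.choose (N - w j) (p - w j) ≤ p^(w j) * Nat.choose N p :=
          descend_choose (w j) p N (le_trans hwjh hhp) hpN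
        calc Ij.card * Nat.choose (N - w j) (p - w j) * N
            ≤ (N^(w j - 1) * (n₁ + h)) * Nat.choose (N - w j) (p - w j) * N :=
              Nat.mul_le_mul_right _ (Nat.mul_le_mul_right _ hcardIj)
          _ = (n₁ + h) * (N^(w j) * Nat.choose (N - w j) (p - w j)) := by
              have : N^(w j - 1) * N = N^(w j) := by
                rw [← pow_succ]
                congr 1
                omega
              rw [← this]
              ring
          _ ≤ (n₁ + h) * (p^(w j) * Nat.choose N p) := Nat.mul_le_mul_left _ hdc
          _ ≤ (n₁ + h) * (p^h * Nat.choose N p) := by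
              apply Nat.mul_le_mul_left
              apply Nat.mul_le_mul_right
              exact Nat.pow_le_pow_right (by omega) hwjh
          _ = (n₁ + h) * p^h * Nat.choose N p := by ring
    -- put everything together
    have hfinal : Nat.choose N p * N ≤ q * ((n₁ + h) * p^h * Nat.choose N p) := by
      calc Nat.choose N p * N = Φ.card * N := by rw [hΦcard]
        _ = (∑ c ∈ Φ.image θ, (Φ.filter (fun P => θ P = c)).card) * N := by
            rw [← hfibsum]
        _ ≤ (∑ c ∈ Φ.image θ, Nat.choose (N - w c.1) (p - w c.1)) * N :=
            Nat.mul_le_mul_right _ (Finset.sum_le_sum hfiber)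
        _ = (∑ j : Fin q, ∑ c ∈ (Φ.image θ).filter (fun c => c.1 = j),
              Nat.choose (N - w c.1) (p - w c.1)) * N := by rw [← hgroup]
        _ = ∑ j : Fin q, (∑ c ∈ (Φ.image θ).filter (fun c => c.1 = j),
              Nat.choose (N - w c.1) (p - w c.1)) * N := by
            rw [Finset.sum_mul]
        _ ≤ ∑ _j : Fin q, (n₁ + h) * p^h * Nat.choose N p :=
            Finset.sum_le_sum (fun j _ => hperj j)
        _ = q * ((n₁ + h) * p^h * Nat.choose N p) := by
            rw [Finset.sum_const, Finset.card_univ, Fintype.card_fin, smul_eq_mul]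
    have hchoosepos : 0 < Nat.choose N p := Nat.choose_pos hpN
    have : N ≤ q * (n₁ + h) * p^h := by
      have h2 : Nat.choose N p * N ≤ Nat.choose N p * (q * (n₁ + h) * p^h) := by
        calc Nat.choose N p * N ≤ q * ((n₁ + h) * p^h * Nat.choose N p) := hfinal
          _ = Nat.choose N p * (q * (n₁ + h) * p^h) := by ring
      exact Nat.le_of_mul_le_mul_left h2 hchoosepos
    omega

theorem mainLem {h : ℕ} (hh : 3 ≤ h) :
    ∀ ℓ, 1 ≤ ℓ → ∀ t q (Gs : Fin q → ThreeGraph), (∀ i, MemU ℓ (Gs i)) →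
      (∀ i, (Gs i).verts.card ≤ h) → ((∑ i, (Gs i).verts.card) ≤ t) → t ≤ q*h →
      RamseyProp Gs ((q*h)^(q^(ℓ-1) * h^(2*ℓ) * t)) := by
  intro ℓ hℓ
  induction ℓ, hℓ using Nat.le_induction with
  | base =>
      intro t q Gs hU hcard hsum htq
      rcases Nat.eq_zero_or_pos q with hq0 | hq
      · subst hq0
        intro χ
        exact (χ ∅).elim0
      · rw [show (1:ℕ)-1 = 0 from rfl, show 2*1 = 2 from rfl, pow_zero, one_mul]
        exact baseU1 hh hq Gs (fun i => memU_one_inU1 (hU i)) hcard hsum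
  | succ n hn IH =>
      obtain ⟨m, rfl⟩ : ∃ m, n = m + 1 := ⟨n-1, by omega⟩
      intro t q Gs hU hcard hsum htq
      rw [show m+1+1-1 = m+1 from by omega, show 2*(m+1+1) = 2*m+4 from by omega]
      have IH' : ∀ t q (Gs : Fin q → ThreeGraph), (∀ i, MemU (m+1) (Gs i)) →
          (∀ i, (Gs i).verts.card ≤ h) → ((∑ i, (Gs i).verts.card) ≤ t) → t ≤ q*h →
          RamseyProp Gs ((q*h)^(q^m * h^(2*m+2) * t)) := by
        intro t' q' Gs' h1 h2 h3 h4
        have h5 := IH t' q' Gs' h1 h2 h3 h4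
        rwa [show m+1-1 = m from by omega, show 2*(m+1) = 2*m+2 from by omega] at h5
      exact step_main hh IH' t q Gs hU hcard hsum htq

/-- Let `ℓ ≥ 1`, `h ≥ 3`, and let `G₁, …, G_q ∈ 𝒰_ℓ` be 3-graphs each on at
most `h` vertices, with `t = Σᵢ v(Gᵢ)`. Then
`r(G₁, …, G_q) ≤ (q·h) ^ (q^(ℓ−1) · h^(2ℓ) · t)`. -/
theorem stmt7 (ℓ h q : ℕ) (hℓ : 1 ≤ ℓ) (hh : 3 ≤ h) (Gs : Fin q → ThreeGraph)
    (hU : ∀ i, MemU ℓ (Gs i)) (hcard : ∀ i, (Gs i).verts.card ≤ h)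
    (t : ℕ) (ht : t = ∑ i, (Gs i).verts.card) :
    ramseyNumber Gs ≤ (q * h) ^ (q ^ (ℓ - 1) * h ^ (2 * ℓ) * t) := by
  have htq : t ≤ q * h := by
    rw [ht]
    have : ∑ i, (Gs i).verts.card ≤ (Finset.univ : Finset (Fin q)).card • h :=
      Finset.sum_le_card_nsmul _ _ _ (fun i _ => hcard i)
    simpa [Finset.card_univ, mul_comm] using this
  have hmem : RamseyProp Gs ((q * h) ^ (q ^ (ℓ - 1) * h ^ (2 * ℓ) * t)) :=
    mainLem hh ℓ hℓ t q Gs hU hcard (le_of_eq ht.symm) htq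
  exact Nat.sInf_le hmem
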